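/- For u ∈ W and λ∨ ∈ P∨, the element u t_{λ∨} of the extended affine Weyl group satisfies ℓ(u t_{λ∨}) = Σ_{α ∈ R⁺} |⟨λ∨, α⟩ + χ(u(α) < 0)|, where χ(P) = 1 if the condition P holds and 0 otherwise. -/
import Mathlib


/-- For `u ∈ W` and `λ∨ ∈ P∨`, the element `u t_{λ∨}` of the extended
affine Weyl group satisfies
`ℓ(u t_{λ∨}) = Σ_{α ∈ R⁺} |⟨λ∨, α⟩ + χ(u(α) < 0)|`,
where the length is the number of inversions among positive real affine roots
(modeled as pairs `(α, n) = α + nε`), and `u t_{λ∨}` acts on affine roots by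
`(α, n) ↦ (u(α), n − ⟨α, λ∨⟩)`. -/
theorem stmt4 {M : Type*} [AddCommGroup M] [DecidableEq M]
    (R Rpos : Finset M)
    (hRsplit : ∀ γ, γ ∈ R ↔ (γ ∈ Rpos ∨ -γ ∈ Rpos))
    (hdisj : ∀ γ ∈ Rpos, -γ ∉ Rpos)
    -- u ∈ W permutes the finite roots
    (u : M ≃+ M) (hu : ∀ γ ∈ R, u γ ∈ R)
    -- λ∨ ∈ P∨ as an additive functional ⟨·, λ∨⟩ on the root lattice
    (lv : M →+ ℤ)
    -- the action of u t_{λ∨} on affine real roots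
    (act : M × ℤ → M × ℤ) (hact : ∀ α n, act (α, n) = (u α, n - lv α))
    -- positive real affine roots
    (pos : Set (M × ℤ))
    (hpos : pos = {β | β.1 ∈ R ∧ (0 < β.2 ∨ (β.2 = 0 ∧ β.1 ∈ Rpos))})
    -- ℓ(u t_{λ∨}) = number of inversions
    (len : ℕ) (hlen : len = Set.ncard {β ∈ pos | act β ∉ pos}) :
    (len : ℤ) = ∑ α ∈ Rpos, |lv α + (if -(u α) ∈ Rpos then 1 else 0)| := by
  classical
  -- the "correction" χ(u(α) < 0)
  set c : M → ℤ := fun β => if -(u β) ∈ Rpos then 1 else 0 with hc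
  -- explicit finite model of the inversion set
  set f : M → Finset (M × ℤ) := fun β =>
    ((Finset.Ico (0:ℤ) (lv β + c β)).image (fun n => (β, n))) ∪
    ((Finset.Ico (1:ℤ) (1 - lv β - c β)).image (fun n => (-β, n))) with hf
  set T : Finset (M × ℤ) := Rpos.biUnion f with hT
  have hne : ∀ β ∈ Rpos, ∀ β' ∈ Rpos, β ≠ -β' := by
    intro β hβ β' hβ' h
    exact hdisj β' hβ' (h ▸ hβ)
  have hcneg : ∀ γ, γ ∈ R → c (-γ) = 1 - c γ := by
    intro γ hγR
    have hcc : -(u (-γ)) = u γ := by simp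
    by_cases hneg : -(u γ) ∈ Rpos
    · have h1 : u γ ∉ Rpos := fun h => hdisj _ h hneg
      simp only [hc, hcc, if_pos hneg, if_neg h1]
      norm_num
    · have h1 : u γ ∈ Rpos := by
        rcases (hRsplit (u γ)).1 (hu γ hγR) with h | h
        · exact h
        · exact absurd h hneg
      simp only [hc, hcc, if_neg hneg, if_pos h1]
      norm_num
  -- clean characterization of the inversion set
  have key : ∀ γ n, ((γ, n) ∈ {β ∈ pos | act β ∉ pos}) ↔
      γ ∈ R ∧ (0 < n ∨ (n = 0 ∧ γ ∈ Rpos)) ∧ n < lv γ + c γ := by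
    intro γ n
    simp only [Set.mem_setOf_eq, hpos, hact]
    constructor
    · rintro ⟨⟨hγR, hn⟩, hnp⟩
      refine ⟨hγR, hn, ?_⟩
      have huγ : u γ ∈ R := hu γ hγR
      by_cases hneg : -(u γ) ∈ Rpos
      · simp only [hc, if_pos hneg]
        by_contra hlt
        push_neg at hlt
        exact hnp ⟨huγ, Or.inl (by omega)⟩
      · have hup : u γ ∈ Rpos := by
          rcases (hRsplit (u γ)).1 huγ with h | h
          · exact h
          · exact absurd h hneg
        simp only [hc, if_neg hneg]
        by_contra hlt
        push_neg at hlt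
        rcases lt_or_eq_of_le hlt with h | h
        · exact hnp ⟨huγ, Or.inl (by omega)⟩
        · exact hnp ⟨huγ, Or.inr ⟨by omega, hup⟩⟩
    · rintro ⟨hγR, hn, hlt⟩
      refine ⟨⟨hγR, hn⟩, ?_⟩
      rintro ⟨-, h | h⟩
      · by_cases hneg : -(u γ) ∈ Rpos
        · rw [hc] at hlt; simp only [if_pos hneg] at hlt; omega
        · rw [hc] at hlt; simp only [if_neg hneg] at hlt; omega
      · have hup : u γ ∈ Rpos := h.2
        have hneg : -(u γ) ∉ Rpos := hdisj _ hup
        simp only [hc, if_neg hneg] at hlt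
        omega
  -- characterization of T
  have keyT : ∀ γ n, ((γ, n) ∈ T) ↔
      γ ∈ R ∧ (0 < n ∨ (n = 0 ∧ γ ∈ Rpos)) ∧ n < lv γ + c γ := by
    intro γ n
    simp only [hT, hf, Finset.mem_biUnion, Finset.mem_union, Finset.mem_image,
      Finset.mem_Ico, Prod.mk.injEq]
    constructor
    · rintro ⟨β, hβ, ⟨m, ⟨hm0, hm1⟩, hβγ, hmn⟩ | ⟨m, ⟨hm0, hm1⟩, hβγ, hmn⟩⟩
      · cases hβγ; cases hmn
        refine ⟨(hRsplit γ).2 (Or.inl hβ), ?_, by omega⟩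
        rcases eq_or_lt_of_le hm0 with h | h
        · exact Or.inr ⟨h.symm, hβ⟩
        · exact Or.inl h
      · -- γ = -β
        cases hβγ; cases hmn
        have hβR : β ∈ R := (hRsplit β).2 (Or.inl hβ)
        have hcn : c (-β) = 1 - c β := hcneg β hβR
        have hlvn : lv (-β) = -(lv β) := map_neg lv β
        refine ⟨(hRsplit (-β)).2 (Or.inr (by rw [neg_neg]; exact hβ)),
          Or.inl (by omega), ?_⟩
        rw [hcn, hlvn]; omega
    · rintro ⟨hγR, hn, hlt⟩
      rcases (hRsplit γ).1 hγR with hp | hp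
      · exact ⟨γ, hp, Or.inl ⟨n, ⟨by omega, hlt⟩, rfl, rfl⟩⟩
      · have hγp : γ ∉ Rpos := fun h => hne γ h (-γ) hp (by rw [neg_neg])
        have hn1 : 1 ≤ n := by
          rcases hn with h | h
          · omega
          · exact absurd h.2 hγp
        refine ⟨-γ, hp, Or.inr ⟨n, ⟨hn1, ?_⟩, by rw [neg_neg], rfl⟩⟩
        -- need n < 1 - lv (-γ) - c (-γ)
        have hcn : c (-γ) = 1 - c γ := hcneg γ hγR
        have hlvn : lv (-γ) = -(lv γ) := map_neg lv γ
        rw [hcn, hlvn]; omega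
  have hset : {β ∈ pos | act β ∉ pos} = (T : Set (M × ℤ)) := by
    ext ⟨γ, n⟩
    rw [key γ n, Finset.mem_coe, keyT γ n]
  -- counting
  have hdisjf : ∀ β ∈ Rpos, ∀ β' ∈ Rpos, β ≠ β' → Disjoint (f β) (f β') := by
    intro β hβ β' hβ' hne'
    rw [Finset.disjoint_left]
    rintro ⟨γ, n⟩ hx hx'
    simp only [hf, Finset.mem_union, Finset.mem_image, Prod.mk.injEq] at hx hx'
    have h1 : γ = β ∨ γ = -β := by
      rcases hx with ⟨m, -, h, -⟩ | ⟨m, -, h, -⟩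
      · exact Or.inl h.symm
      · exact Or.inr h.symm
    have h2 : γ = β' ∨ γ = -β' := by
      rcases hx' with ⟨m, -, h, -⟩ | ⟨m, -, h, -⟩
      · exact Or.inl h.symm
      · exact Or.inr h.symm
    rcases h1 with h1 | h1 <;> rcases h2 with h2 | h2
    · exact hne' (h1.symm.trans h2)
    · exact hne β hβ β' hβ' (h1.symm.trans h2)
    · exact hne β' hβ' β hβ (h2.symm.trans h1)
    · exact hne' (neg_injective (h1.symm.trans h2))
  have hcard : ∀ β ∈ Rpos, ((f β).card : ℤ) = |lv β + c β| := by
    intro β hβ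
    have hβne : β ≠ -β := hne β hβ β hβ
    have hd : Disjoint ((Finset.Ico (0:ℤ) (lv β + c β)).image (fun n => (β, n)))
        ((Finset.Ico (1:ℤ) (1 - lv β - c β)).image (fun n => (-β, n))) := by
      rw [Finset.disjoint_left]
      rintro ⟨γ, n⟩ hx hx'
      simp only [Finset.mem_image, Prod.mk.injEq] at hx hx'
      obtain ⟨m, -, h, -⟩ := hx
      obtain ⟨m', -, h', -⟩ := hx'
      exact hβne (h.trans h'.symm)
    have hinj : ∀ (δ : M), Function.Injective (fun n : ℤ => (δ, n)) := by
      intro δ a b h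
      simpa using congrArg Prod.snd h
    rw [hf]
    rw [Finset.card_union_of_disjoint hd,
      Finset.card_image_of_injective _ (hinj β),
      Finset.card_image_of_injective _ (hinj (-β)),
      Int.card_Ico, Int.card_Ico]
    rcases abs_cases (lv β + c β) with ⟨h1, h2⟩ | ⟨h1, h2⟩ <;> rw [h1] <;> omega
  rw [hlen, hset, Set.ncard_coe_finset, hT, Finset.card_biUnion hdisjf]
  push_cast
  refine Finset.sum_congr rfl ?_
  intro β hβ
  exact hcard β hβ
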